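/- Let B be a complete Boolean algebra and let P ⪯ Q be countably infinite partitions of B such that each q_n ∈ Q (for an injective enumeration (q_n)_{n∈ℕ} of Q) is partitioned into infinitely many elements {p_n^m : m ∈ ℕ} of P. Let {f_α : α < κ} be a dominating family of functions ℕ → ℕ, and for each α put a_α = ⨆{p_n^m : n ∈ ℕ, m > f_α(n)}. Then the family {a_α : α < κ} ∪ {q_nᶜ : n ∈ ℕ} has the finite intersection property (every finite subfamily has nonzero meet), and no ultrafilter on B containing this family is a coherent P-ultrafilter. -/

import Mathlib

open Cardinal Filter

variable {B : Type*}

/-- A partition of a Boolean algebra: a set of nonzero, pairwise disjoint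
elements that is maximal (every nonzero element meets some member). -/
def IsBPartition [BooleanAlgebra B] (P : Set B) : Prop :=
  ⊥ ∉ P ∧ (P.Pairwise fun a b => a ⊓ b = ⊥) ∧ ∀ b : B, b ≠ ⊥ → ∃ p ∈ P, b ⊓ p ≠ ⊥

/-- `P` refines `Q`: every member of `P` lies below some member of `Q`. -/
def BRefines [BooleanAlgebra B] (P Q : Set B) : Prop :=
  ∀ p ∈ P, ∃ q ∈ Q, p ≤ q

/-- A filter on a Boolean algebra. -/
def IsBFilter [BooleanAlgebra B] (F : Set B) : Prop :=
  ⊥ ∉ F ∧ ⊤ ∈ F ∧ (∀ a ∈ F, ∀ b : B, a ≤ b → b ∈ F) ∧ ∀ a ∈ F, ∀ b ∈ F, a ⊓ b ∈ F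

/-- An ultrafilter on a Boolean algebra. -/
def IsBUltrafilter [BooleanAlgebra B] (U : Set B) : Prop :=
  IsBFilter U ∧ ∀ b : B, b ∈ U ∨ bᶜ ∈ U

/-- The countable chain condition: every set of pairwise disjoint
nonzero elements is countable. -/
def BCCC (B : Type*) [BooleanAlgebra B] : Prop :=
  ∀ S : Set B, ⊥ ∉ S → (S.Pairwise fun a b => a ⊓ b = ⊥) → S.Countable

/-- A filter on ℕ, presented as a family of subsets of ℕ. -/
def IsNFilter (V : Set (Set ℕ)) : Prop :=
  ∅ ∉ V ∧ Set.univ ∈ V ∧ (∀ A ∈ V, ∀ C : Set ℕ, A ⊆ C → C ∈ V) ∧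
    ∀ A ∈ V, ∀ C ∈ V, A ∩ C ∈ V

/-- An ultrafilter on ℕ, presented as a family of subsets of ℕ. -/
def IsNUltrafilter (V : Set (Set ℕ)) : Prop :=
  IsNFilter V ∧ ∀ A : Set ℕ, A ∈ V ∨ Aᶜ ∈ V

/-- A P-point on ℕ: an ultrafilter such that for every partition of ℕ into
sets not in the ultrafilter there is a member meeting each piece finitely. -/
def IsPPointFamily (V : Set (Set ℕ)) : Prop :=
  IsNUltrafilter V ∧ ∀ A : ℕ → Set ℕ, (Pairwise fun m n => A m ∩ A n = ∅) →
    (⋃ n, A n) = Set.univ → (∀ n, A n ∉ V) → ∃ S ∈ V, ∀ n, (S ∩ A n).Finite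

/-- A selective ultrafilter on ℕ: for every partition of ℕ into sets not in
the ultrafilter there is a member meeting each piece in at most one point. -/
def IsSelectiveFamily (V : Set (Set ℕ)) : Prop :=
  IsNUltrafilter V ∧ ∀ A : ℕ → Set ℕ, (Pairwise fun m n => A m ∩ A n = ∅) →
    (⋃ n, A n) = Set.univ → (∀ n, A n ∉ V) → ∃ S ∈ V, ∀ n, (S ∩ A n).Subsingleton

/-- A coherent P-ultrafilter: an ultrafilter whose trace on every countably
infinite partition is a P-point on ℕ. -/
def IsCoherentPUltrafilter [CompleteBooleanAlgebra B] (U : Set B) : Prop :=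
  IsBUltrafilter U ∧ ∀ p : ℕ → B, Function.Injective p → IsBPartition (Set.range p) →
    IsPPointFamily {A : Set ℕ | (⨆ n ∈ A, p n) ∈ U}

/-- A coherent selective ultrafilter: an ultrafilter whose trace on every
countably infinite partition is a selective ultrafilter on ℕ. -/
def IsCoherentSelectiveUltrafilter [CompleteBooleanAlgebra B] (U : Set B) : Prop :=
  IsBUltrafilter U ∧ ∀ p : ℕ → B, Function.Injective p → IsBPartition (Set.range p) →
    IsSelectiveFamily {A : Set ℕ | (⨆ n ∈ A, p n) ∈ U}

/-- Atomless: every nonzero element properly contains a nonzero element. -/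
def BAtomless (B : Type*) [BooleanAlgebra B] : Prop :=
  ∀ b : B, b ≠ ⊥ → ∃ c : B, c ≠ ⊥ ∧ c < b

/-- The Ketonen argument in `B`: from a dominating family one builds a
centered family which no coherent P-ultrafilter can extend. -/
theorem dominating_family_kills_coherence [CompleteBooleanAlgebra B] {ι : Type*}
    (p : ℕ → ℕ → B) (q : ℕ → B)
    (hpinj : Function.Injective fun x : ℕ × ℕ => p x.1 x.2)
    (hqinj : Function.Injective q)
    (hP : IsBPartition (Set.range fun x : ℕ × ℕ => p x.1 x.2))
    (hQ : IsBPartition (Set.range q))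
    (hpq : ∀ n m : ℕ, p n m ≤ q n)
    (f : ι → ℕ → ℕ)
    (hdom : ∀ g : ℕ → ℕ, ∃ i, ∀ᶠ n in Filter.atTop, g n ≤ f i n)
    (a : ι → B) (ha : ∀ i, a i = ⨆ n, ⨆ m, ⨆ _ : f i n < m, p n m) :
    (∀ (s : Finset ι) (t : Finset ℕ),
        s.inf a ⊓ t.inf (fun n => (q n)ᶜ) ≠ ⊥) ∧
    ∀ U : Set B, (∀ i, a i ∈ U) → (∀ n, (q n)ᶜ ∈ U) →
      ¬IsCoherentPUltrafilter U := by
  -- basic disjointness / nonzeroness facts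
  have hpd : ∀ x y : ℕ × ℕ, x ≠ y → p x.1 x.2 ⊓ p y.1 y.2 = ⊥ := by
    intro x y hxy
    exact hP.2.1 ⟨x, rfl⟩ ⟨y, rfl⟩ (fun h => hxy (hpinj h))
  have hqd : ∀ m n : ℕ, m ≠ n → q m ⊓ q n = ⊥ := by
    intro m n hmn
    exact hQ.2.1 ⟨m, rfl⟩ ⟨n, rfl⟩ (fun h => hmn (hqinj h))
  have hpne : ∀ n m : ℕ, p n m ≠ ⊥ := by
    intro n m h
    exact hP.1 ⟨(n, m), h⟩
  constructor
  · -- finite intersection property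
    intro s t
    set n : ℕ := (t.sup id) + 1 with hn
    have hnt : n ∉ t := by
      intro h
      have := Finset.le_sup (f := id) h
      simp only [id] at this
      omega
    set M : ℕ := (s.sup fun i => f i n) + 1 with hM
    have hle : p n M ≤ s.inf a ⊓ t.inf (fun n' => (q n')ᶜ) := by
      refine le_inf ?_ ?_
      · refine Finset.le_inf fun i hi => ?_
        have hfiM : f i n < M := by
          have h := Finset.le_sup (f := fun j => f j n) hi
          have h' : f i n ≤ s.sup fun j => f j n := h
          omega
        rw [ha i]
        exact le_iSup_of_le n (le_iSup_of_le M (le_iSup_of_le hfiM le_rfl))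
      · refine Finset.le_inf fun n' hn' => ?_
        have hne : n ≠ n' := fun h => hnt (h ▸ hn')
        have : q n ⊓ q n' = ⊥ := hqd n n' hne
        calc p n M ≤ q n := hpq n M
          _ ≤ (q n')ᶜ := le_compl_iff_disjoint_right.mpr (disjoint_iff.mpr this)
    intro hbot
    exact hpne n M (le_bot_iff.mp (hbot ▸ hle))
  · -- no coherent P-ultrafilter contains the family
    intro U haU hqU hU
    obtain ⟨hUult, hcoh⟩ := hU
    obtain ⟨⟨hUbot, hUtop, hUup, hUinf⟩, _⟩ := hUult
    -- enumerate the partition P by ℕ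
    set e : ℕ ≃ ℕ × ℕ := (Denumerable.eqv (ℕ × ℕ)).symm with he
    set P' : ℕ → B := fun k => p (e k).1 (e k).2 with hP'def
    have hP'inj : Function.Injective P' := by
      intro k l hkl
      have : e k = e l := hpinj hkl
      exact e.injective this
    have hrange : Set.range P' = Set.range fun x : ℕ × ℕ => p x.1 x.2 := by
      have := Function.Surjective.range_comp e.surjective (fun x : ℕ × ℕ => p x.1 x.2)
      exact this
    have hP'part : IsBPartition (Set.range P') := hrange ▸ hP
    have hpp := hcoh P' hP'inj hP'part
    obtain ⟨_, hppoint⟩ := hpp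
    -- the partition of ℕ induced by Q
    set A : ℕ → Set ℕ := fun n => {k | (e k).1 = n} with hA
    have hApd : Pairwise fun m n => A m ∩ A n = ∅ := by
      intro m n hmn
      ext k
      simp only [hA, Set.mem_inter_iff, Set.mem_setOf_eq, Set.mem_empty_iff_false, iff_false]
      rintro ⟨h1, h2⟩
      exact hmn (h1 ▸ h2 ▸ rfl)
    have hAun : (⋃ n, A n) = Set.univ := by
      ext k
      simp only [Set.mem_iUnion, Set.mem_univ, iff_true]
      exact ⟨(e k).1, rfl⟩
    have hAnot : ∀ n, A n ∉ {A : Set ℕ | (⨆ k ∈ A, P' k) ∈ U} := by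
      intro n hmem
      simp only [Set.mem_setOf_eq] at hmem
      have hle : (⨆ k ∈ A n, P' k) ≤ q n := by
        refine iSup₂_le fun k hk => ?_
        have hk1 : (e k).1 = n := hk
        calc P' k = p (e k).1 (e k).2 := rfl
          _ ≤ q (e k).1 := hpq _ _
          _ = q n := by rw [hk1]
      have : (⨆ k ∈ A n, P' k) ⊓ (q n)ᶜ ∈ U := hUinf _ hmem _ (hqU n)
      have hbot : (⨆ k ∈ A n, P' k) ⊓ (q n)ᶜ = ⊥ := by
        have h1 : (⨆ k ∈ A n, P' k) ⊓ (q n)ᶜ ≤ q n ⊓ (q n)ᶜ :=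
          inf_le_inf_right _ hle
        rw [inf_compl_eq_bot] at h1
        exact le_bot_iff.mp h1
      exact hUbot (hbot ▸ this)
    obtain ⟨S, hSU, hSfin⟩ := hppoint A hApd hAun hAnot
    simp only [Set.mem_setOf_eq] at hSU
    -- the dominating function
    set g : ℕ → ℕ := fun n => ((hSfin n).toFinset).sup fun k => (e k).2 with hg
    have hgbd : ∀ k ∈ S, (e k).2 ≤ g (e k).1 := by
      intro k hk
      have hk' : k ∈ (hSfin (e k).1).toFinset := by
        rw [Set.Finite.mem_toFinset]
        exact ⟨hk, rfl⟩
      exact Finset.le_sup (f := fun k => (e k).2) hk'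
    obtain ⟨i, hi⟩ := hdom g
    obtain ⟨N, hN⟩ := Filter.eventually_atTop.mp hi
    -- finite infimum of the q-complements below N
    set c : B := (Finset.range N).inf fun n => (q n)ᶜ with hc
    have hcU : c ∈ U := by
      have : ∀ (t : Finset ℕ), (t.inf fun n => (q n)ᶜ) ∈ U := by
        intro t
        induction t using Finset.induction with
        | empty => simpa using hUtop
        | insert _ _ hx ih =>
          rw [Finset.inf_insert]
          exact hUinf _ (hqU _) _ ih
      exact this _
    set b : B := a i ⊓ (⨆ k ∈ S, P' k) ⊓ c with hb
    have hbU : b ∈ U := hUinf _ (hUinf _ (haU i) _ hSU) _ hcU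
    have hbbot : b = ⊥ := by
      rw [hb]
      rw [inf_right_comm]
      -- b = ⨆ k ∈ S, (a i ⊓ c ⊓ P' k)
      rw [inf_iSup_eq]
      refine le_bot_iff.mp (iSup_le fun k => ?_)
      rw [inf_iSup_eq]
      refine iSup_le fun hk => ?_
      by_cases hcase : N ≤ (e k).1
      · -- a i is disjoint from P' k
        have : a i ⊓ P' k = ⊥ := by
          rw [ha i]
          simp only [iSup_inf_eq]
          refine le_bot_iff.mp (iSup_le fun n' => iSup_le fun m' => iSup_le fun hfm' => ?_)
          have hne : (n', m') ≠ ((e k).1, (e k).2) := by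
            intro hEq
            have h1 : n' = (e k).1 := (Prod.mk.injEq _ _ _ _ ▸ hEq).1
            have h2 : m' = (e k).2 := (Prod.mk.injEq _ _ _ _ ▸ hEq).2
            have h3 : (e k).2 ≤ g (e k).1 := hgbd k hk
            have h4 : g (e k).1 ≤ f i (e k).1 := hN _ hcase
            subst h1; subst h2
            omega
          exact le_bot_iff.mpr (hpd (n', m') ((e k).1, (e k).2) hne)
        calc a i ⊓ c ⊓ P' k ≤ a i ⊓ P' k := inf_le_inf_right _ inf_le_left
          _ = ⊥ := this
      · -- P' k ≤ q (e k).1 and c ≤ (q (e k).1)ᶜ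
        push_neg at hcase
        have h1 : c ≤ (q (e k).1)ᶜ :=
          Finset.inf_le (Finset.mem_range.mpr hcase)
        have h2 : P' k ≤ q (e k).1 := hpq _ _
        calc a i ⊓ c ⊓ P' k ≤ c ⊓ P' k := inf_le_inf_right _ inf_le_right
          _ ≤ (q (e k).1)ᶜ ⊓ q (e k).1 := inf_le_inf h1 h2
          _ = ⊥ := compl_inf_eq_bot
    exact hUbot (hbbot ▸ hbU)
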